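/- Overflow/underflow step in Theorem on finite embeddability: if A is SIM and finitely embeddable in B, then there exists an infinite hyperfinite interval I in *ℕ with g_{*A}(I) ≈ 0 and some t ∈ *ℕ with t + (*A ∩ I) ⊆ *B. -/

import Mathlib

set_option maxHeartbeats 2000000


open Filter Set MeasureTheory

/-- The hypernatural numbers: the ultrapower of `ℕ` by the hyperfilter. -/
abbrev SN : Type := Filter.Germ (Filter.hyperfilter ℕ : Filter ℕ) ℕ

/-- Membership of a hypernatural in the internal set determined by a sequence of sets. -/
def memF (F : ℕ → Set ℕ) (x : SN) : Prop :=
  x.liftOn (fun f => ∀ᶠ i in (Filter.hyperfilter ℕ : Filter ℕ), f i ∈ F i)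
    (by
      intro f g h
      exact propext (eventually_congr (h.mono fun i hi => by rw [hi])))

/-- A set of hypernaturals is internal if it is determined by a sequence of subsets of `ℕ`. -/
def InternalSet (A : Set SN) : Prop := ∃ F : ℕ → Set ℕ, A = {x | memF F x}

/-- The nonstandard extension `*A ⊆ *ℕ` of a set `A ⊆ ℕ`. -/
def starN (A : Set ℕ) : Set SN := {x | memF (fun _ => A) x}

/-- The canonical map from the hypernaturals to the hyperreals. -/
noncomputable def toR (x : SN) : Hyperreal := Filter.Germ.map (fun n : ℕ => (n : ℝ)) x

/-- `[y,z]` is an infinite (hyperfinite) interval. -/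
def InfInterval (y z : SN) : Prop := ∀ n : ℕ, y + (n : SN) < z

/-- The map `st_I : I → [0,1]`, `st_I(a) = st((a-y)/(z-y))`. -/
noncomputable def stI (y z : SN) (x : SN) : ℝ :=
  Hyperreal.st ((toR x - toR y) / (toR z - toR y))

/-- `λ_I(A)`: Lebesgue measure of the standard part image of `A ∩ I`, `I = [y,z]`. -/
noncomputable def lam (A : Set SN) (y z : SN) : ℝ :=
  (volume (stI y z '' (A ∩ Set.Icc y z))).toReal

/-- `g_A(I)`: the normalized length of the largest gap of `A` on `I = [y,z]`. -/
noncomputable def gap (A : Set SN) (y z : SN) : ℝ :=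
  sSup {r : ℝ | 0 ≤ r ∧ ∃ c d : SN, c ∈ Set.Icc y z ∧ d ∈ Set.Icc y z ∧ c ≤ d ∧
    Set.Icc c d ∩ A = ∅ ∧ (r : Hyperreal) ≤ (toR d - toR c) / (toR z - toR y)}

/-- `A` has the interval-measure (IM) property on `I = [y,z]`. -/
def IMOn (A : Set SN) (y z : SN) : Prop :=
  ∀ ε : ℝ, 0 < ε → ∃ δ : ℝ, 0 < δ ∧ ∀ c d : SN, y ≤ c → c ≤ d → d ≤ z →
    InfInterval c d → gap A c d ≤ δ → 1 - ε ≤ lam A c d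

/-- `A` has the enhanced IM property on `I = [y,z]`. -/
def EnhancedIMOn (A : Set SN) (y z : SN) : Prop := IMOn A y z ∧ 0 < lam A y z

/-- `A ⊆ ℕ` has the standard interval-measure (SIM) property. -/
def SIM (A : Set ℕ) : Prop :=
  (∀ y z : SN, InfInterval y z → IMOn (starN A) y z) ∧
  ∃ y z : SN, InfInterval y z ∧ EnhancedIMOn (starN A) y z

/-- `A ⊆ ℕ` is supra-SIM if it contains a SIM set. -/
def SupraSIM (A : Set ℕ) : Prop := ∃ B ⊆ A, SIM B

/-- `A` is finitely embedded in `B`: every finite subset of `A` has a translate in `B`. -/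
def FinEmbed (A B : Set ℕ) : Prop := ∀ F : Finset ℕ, ↑F ⊆ A → ∃ t : ℕ, ∀ a ∈ F, t + a ∈ B

local notation "U" => (Filter.hyperfilter ℕ : Filter ℕ)

lemma sn_rep (x : SN) : ∃ f : ℕ → ℕ, x = ↑f := ⟨_, (Quot.exists_rep x).choose_spec.symm⟩

lemma ev_large {ya zb : ℕ → ℕ} (hyz : InfInterval (↑ya) (↑zb)) (C : ℝ) :
    ∀ᶠ i in U, C ≤ (zb i : ℝ) - ya i := by
  have h := hyz ⌈C⌉₊
  rw [show ((⌈C⌉₊ : ℕ) : SN) = ↑(fun _ : ℕ => ⌈C⌉₊) from (Filter.Germ.natCast_def _).symm] at h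
  have h' : (↑(fun i => ya i + ⌈C⌉₊) : SN) < ↑zb := h
  refine (Filter.Germ.coe_lt.1 h').mono fun i hi => ?_
  have h1 : (ya i : ℝ) + (⌈C⌉₊ : ℝ) < zb i := by exact_mod_cast hi
  have h2 := Nat.le_ceil C
  linarith

lemma not_infinite_of_bounds {x : Hyperreal} {a b : ℝ} (h1 : (a : Hyperreal) ≤ x)
    (h2 : x ≤ (b : Hyperreal)) : ¬ x.Infinite := by
  rw [Hyperreal.infinite_iff_abs_lt_abs]
  push_neg
  refine ⟨|a| + |b|, ?_⟩
  have ha : -(((|a| + |b| : ℝ)) : Hyperreal) ≤ x := by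
    calc -(((|a| + |b| : ℝ)) : Hyperreal) ≤ (a : Hyperreal) := by
          rw [← Hyperreal.coe_neg, Hyperreal.coe_le_coe]
          have := neg_abs_le a
          have := abs_nonneg b
          linarith
      _ ≤ x := h1
  have hb : x ≤ (((|a| + |b| : ℝ)) : Hyperreal) := by
    calc x ≤ (b : Hyperreal) := h2
      _ ≤ _ := by rw [Hyperreal.coe_le_coe]; have := le_abs_self b; have := abs_nonneg a; linarith
  have habs : |x| ≤ (((|a| + |b| : ℝ)) : Hyperreal) := abs_le.2 ⟨ha, hb⟩
  rw [← Hyperreal.coe_abs, abs_of_nonneg (by positivity : (0:ℝ) ≤ |a| + |b|)]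
  exact habs

lemma isSt_of_bounds {x : Hyperreal} {r : ℝ}
    (h : ∀ δ : ℝ, 0 < δ → ((r - δ : ℝ) : Hyperreal) ≤ x ∧ x ≤ ((r + δ : ℝ) : Hyperreal)) :
    x.IsSt r := by
  rw [Hyperreal.isSt_iff_abs_sub_lt_delta]
  intro δ hδ
  obtain ⟨h1, h2⟩ := h (δ/2) (by linarith)
  rw [Hyperreal.coe_sub] at h1
  rw [Hyperreal.coe_add] at h2
  have habs : |x - (r : Hyperreal)| ≤ ((δ/2 : ℝ) : Hyperreal) := abs_le.2 ⟨by linarith, by linarith⟩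
  calc |x - (r : Hyperreal)| ≤ ((δ/2 : ℝ) : Hyperreal) := habs
    _ < (δ : Hyperreal) := by rw [Hyperreal.coe_lt_coe]; linarith

lemma null_of_porous (E : Set ℝ) (ρ : ℝ) (hρ : 0 < ρ) (hE : E ⊆ Icc 0 1)
    (h : ∀ p q : ℝ, 0 ≤ p → p < q → q ≤ 1 →
      ∃ u v : ℝ, p ≤ u ∧ u < v ∧ v ≤ q ∧ ρ * (q - p) ≤ v - u ∧ E ∩ Ioo u v = ∅) :
    volume E = 0 := by
  have hρ1 : ρ ≤ 1 := by
    obtain ⟨u, v, hu, huv, hv, hlen, -⟩ := h 0 1 le_rfl one_pos le_rfl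
    nlinarith
  have key : ∀ k : ℕ, ∀ p q : ℝ, 0 ≤ p → p ≤ q → q ≤ 1 →
      volume (E ∩ Icc p q) ≤ ENNReal.ofReal ((1 - ρ) ^ k * (q - p)) := by
    intro k
    induction k with
    | zero =>
      intro p q hp hpq hq
      calc volume (E ∩ Icc p q) ≤ volume (Icc p q) := measure_mono inter_subset_right
        _ = ENNReal.ofReal (q - p) := by rw [Real.volume_Icc]
        _ ≤ _ := by rw [pow_zero, one_mul]
    | succ k ih =>
      intro p q hp hpq hq
      rcases eq_or_lt_of_le hpq with rfl | hlt
      · have hs : E ∩ Icc p p ⊆ {p} := by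
          intro x hx
          simp only [Icc_self] at hx
          exact hx.2
        calc volume (E ∩ Icc p p) ≤ volume ({p} : Set ℝ) := measure_mono hs
          _ = 0 := Real.volume_singleton
          _ ≤ _ := zero_le
      obtain ⟨u, v, hu, huv, hv, hlen, hgap⟩ := h p q hp hlt hq
      have hsub : E ∩ Icc p q ⊆ (E ∩ Icc p u) ∪ (E ∩ Icc v q) := by
        intro x hx
        rcases lt_or_ge u x with h1 | h1
        · rcases lt_or_ge x v with h2 | h2
          · exact absurd hgap (Set.Nonempty.ne_empty ⟨x, hx.1, h1, h2⟩)
          · exact Or.inr ⟨hx.1, h2, hx.2.2⟩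
        · exact Or.inl ⟨hx.1, hx.2.1, h1⟩
      have hρ0 : (0:ℝ) ≤ (1 - ρ) ^ k := pow_nonneg (by linarith) k
      have h1 := ih p u hp hu (by linarith)
      have h2 := ih v q (by linarith) (by linarith) hq
      calc volume (E ∩ Icc p q) ≤ volume ((E ∩ Icc p u) ∪ (E ∩ Icc v q)) := measure_mono hsub
        _ ≤ volume (E ∩ Icc p u) + volume (E ∩ Icc v q) := measure_union_le _ _
        _ ≤ ENNReal.ofReal ((1 - ρ) ^ k * (u - p)) + ENNReal.ofReal ((1 - ρ) ^ k * (q - v)) :=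
            add_le_add h1 h2
        _ = ENNReal.ofReal ((1 - ρ) ^ k * (u - p) + (1 - ρ) ^ k * (q - v)) := by
            rw [ENNReal.ofReal_add (by nlinarith) (by nlinarith)]
        _ ≤ ENNReal.ofReal ((1 - ρ) ^ (k + 1) * (q - p)) := by
            apply ENNReal.ofReal_le_ofReal
            have : (1 - ρ) ^ (k+1) = (1 - ρ)^k * (1 - ρ) := by ring
            nlinarith
  have hE' : E = E ∩ Icc 0 1 := (inter_eq_left.2 hE).symm
  rw [hE']
  by_contra hne
  have hfin : volume (E ∩ Icc (0:ℝ) 1) < ⊤ :=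
    lt_of_le_of_lt (measure_mono inter_subset_right)
      (by rw [Real.volume_Icc]; exact ENNReal.ofReal_lt_top)
  have hεpos : 0 < (volume (E ∩ Icc (0:ℝ) 1)).toReal := ENNReal.toReal_pos hne hfin.ne
  obtain ⟨k, hk⟩ : ∃ k : ℕ, (1 - ρ) ^ k < (volume (E ∩ Icc (0:ℝ) 1)).toReal := by
    have hlim : Tendsto (fun k : ℕ => (1 - ρ) ^ k) atTop (nhds 0) := by
      apply tendsto_pow_atTop_nhds_zero_of_abs_lt_one
      rw [abs_lt]; constructor <;> linarith
    exact ((hlim.eventually (gt_mem_nhds hεpos)).exists)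
  have hkey := key k 0 1 le_rfl zero_le_one le_rfl
  rw [sub_zero, mul_one] at hkey
  have := (ENNReal.toReal_le_toReal hfin.ne ENNReal.ofReal_ne_top).2 hkey
  rw [ENNReal.toReal_ofReal (pow_nonneg (by linarith) k)] at this
  linarith

lemma exists_good (A : Set ℕ) (hA : SIM A) (n : ℕ) (hn : 0 < n) :
    ∃ a b : ℕ, a + n ≤ b ∧ ∀ u v : ℕ, a ≤ u → u ≤ v → v ≤ b →
      (∀ x : ℕ, u ≤ x → x ≤ v → x ∉ A) → n * (v - u) ≤ b - a := by
  by_contra hcon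
  push_neg at hcon
  obtain ⟨y, z, hyz, -, hlam⟩ := hA.2
  obtain ⟨ya, rfl⟩ := sn_rep y
  obtain ⟨zb, rfl⟩ := sn_rep z
  set E := stI ↑ya ↑zb '' (starN A ∩ Icc (↑ya : SN) ↑zb) with hEdef
  have hevyz : ∀ᶠ i in U, ya i ≤ zb i := (ev_large hyz 0).mono (fun i hi => by
    have h : (ya i : ℝ) ≤ zb i := by linarith
    exact_mod_cast h)
  have hDpos : (0 : Hyperreal) < toR ↑zb - toR ↑ya := by
    show Hyperreal.ofSeq (fun _ => 0) < Hyperreal.ofSeq (fun i => (zb i : ℝ) - ya i)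
    exact Hyperreal.ofSeq_lt_ofSeq.2 ((ev_large hyz 1).mono fun i hi => by linarith)
  have hRb : ∀ xf : ℕ → ℕ, (↑ya : SN) ≤ ↑xf → (↑xf : SN) ≤ ↑zb →
      (0 : Hyperreal) ≤ (toR ↑xf - toR ↑ya) / (toR ↑zb - toR ↑ya) ∧
      (toR ↑xf - toR ↑ya) / (toR ↑zb - toR ↑ya) ≤ 1 := by
    intro xf h1 h2
    have hn1 : (0 : Hyperreal) ≤ toR ↑xf - toR ↑ya := by
      show Hyperreal.ofSeq (fun _ => 0) ≤ Hyperreal.ofSeq (fun i => (xf i : ℝ) - ya i)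
      exact Filter.Germ.coe_le.2 ((Filter.Germ.coe_le.1 h1).mono fun i hi => by
        have h : (ya i : ℝ) ≤ xf i := by exact_mod_cast hi
        simpa using h)
    have hn2 : toR ↑xf - toR ↑ya ≤ toR ↑zb - toR ↑ya := by
      show Hyperreal.ofSeq (fun i => (xf i : ℝ) - ya i) ≤ Hyperreal.ofSeq (fun i => (zb i : ℝ) - ya i)
      exact Filter.Germ.coe_le.2 ((Filter.Germ.coe_le.1 h2).mono fun i hi => by
        have h : (xf i : ℝ) ≤ zb i := by exact_mod_cast hi
        simpa using h)
    exact ⟨div_nonneg hn1 hDpos.le, (div_le_one hDpos).2 hn2⟩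
  have hnotinf : ∀ xf : ℕ → ℕ, (↑ya : SN) ≤ ↑xf → (↑xf : SN) ≤ ↑zb →
      ¬ ((toR ↑xf - toR ↑ya) / (toR ↑zb - toR ↑ya)).Infinite := by
    intro xf h1 h2
    obtain ⟨hb0, hb1⟩ := hRb xf h1 h2
    exact not_infinite_of_bounds (a := 0) (b := 1)
      (by rw [Hyperreal.coe_zero]; exact hb0) (by rw [Hyperreal.coe_one]; exact hb1)
  have hEsub : E ⊆ Icc (0 : ℝ) 1 := by
    rintro s ⟨x, ⟨hxA, hx1, hx2⟩, rfl⟩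
    obtain ⟨xf, rfl⟩ := sn_rep x
    have hni := hnotinf xf hx1 hx2
    have hst := Hyperreal.isSt_st' hni
    constructor
    · exact (Hyperreal.isSt_refl_real 0).le hst (by rw [Hyperreal.coe_zero]; exact (hRb xf hx1 hx2).1)
    · exact hst.le (Hyperreal.isSt_refl_real 1) (by rw [Hyperreal.coe_one]; exact (hRb xf hx1 hx2).2)
  have hporous : ∀ p q : ℝ, 0 ≤ p → p < q → q ≤ 1 →
      ∃ u v : ℝ, p ≤ u ∧ u < v ∧ v ≤ q ∧ (1/(2*n)) * (q - p) ≤ v - u ∧ E ∩ Ioo u v = ∅ := by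
    intro p q hp hpq hq
    have hqp : (0:ℝ) < q - p := by linarith
    set c : ℕ → ℕ := fun i => ya i + ⌈p * ((zb i : ℝ) - ya i)⌉₊ with hcdef
    set d : ℕ → ℕ := fun i => ya i + ⌊q * ((zb i : ℝ) - ya i)⌋₊ with hddef
    have hL := ev_large hyz (max (((n:ℝ)+2)/(q-p)) (4/(q-p)))
    have hF1 : ∀ᶠ i in U, c i + n ≤ d i := hL.mono (fun i hi => by
      set L := (zb i : ℝ) - ya i with hLdef
      have hL2 : ((n:ℝ)+2)/(q-p) ≤ L := le_trans (le_max_left _ _) hi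
      have hLpos : (0:ℝ) < L := lt_of_lt_of_le (div_pos (by positivity) hqp) hL2
      have h1 : (⌈p*L⌉₊ : ℝ) < p*L + 1 := Nat.ceil_lt_add_one (mul_nonneg hp hLpos.le)
      have h2 : q*L - 1 < (⌊q*L⌋₊ : ℝ) := Nat.sub_one_lt_floor _
      rw [div_le_iff₀ hqp] at hL2
      have h3 : (⌈p*L⌉₊ : ℝ) + n < (⌊q*L⌋₊ : ℝ) := by nlinarith
      have h4 : ⌈p*L⌉₊ + n < ⌊q*L⌋₊ := by exact_mod_cast h3
      simp only [hcdef, hddef, ← hLdef]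
      omega)
    have hF2 : ∀ᶠ i in U, d i ≤ zb i := (hL.and hevyz).mono (fun i hi => by
      set L := (zb i : ℝ) - ya i with hLdef
      have hL2 : ((n:ℝ)+2)/(q-p) ≤ L := le_trans (le_max_left _ _) hi.1
      have hLpos : (0:ℝ) < L := lt_of_lt_of_le (div_pos (by positivity) hqp) hL2
      have h1 : (⌊q*L⌋₊ : ℝ) ≤ q*L := Nat.floor_le (mul_nonneg (by linarith) hLpos.le)
      have h2 : q*L ≤ L := by nlinarith
      have h3 : (ya i : ℝ) + (⌊q*L⌋₊ : ℝ) ≤ zb i := by linarith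
      have h4 : ya i + ⌊q*L⌋₊ ≤ zb i := by exact_mod_cast h3
      simpa only [hddef, ← hLdef] using h4)
    have hch : ∀ i : ℕ, ∃ uv : ℕ × ℕ, c i + n ≤ d i →
        c i ≤ uv.1 ∧ uv.1 ≤ uv.2 ∧ uv.2 ≤ d i ∧
        (∀ x : ℕ, uv.1 ≤ x → x ≤ uv.2 → x ∉ A) ∧ d i - c i < n * (uv.2 - uv.1) := by
      intro i
      by_cases hcd : c i + n ≤ d i
      · obtain ⟨u, v, h1, h2, h3, h4, h5⟩ := hcon (c i) (d i) hcd
        exact ⟨(u, v), fun _ => ⟨h1, h2, h3, h4, h5⟩⟩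
      · exact ⟨(0, 0), fun hh => absurd hh hcd⟩
    choose uvw huvw using hch
    set uf : ℕ → ℕ := fun i => (uvw i).1 with hufdef
    set vf : ℕ → ℕ := fun i => (uvw i).2 with hvfdef
    have hgood : ∀ᶠ i in U, c i ≤ uf i ∧ uf i ≤ vf i ∧ vf i ≤ d i ∧
        (∀ x : ℕ, uf i ≤ x → x ≤ vf i → x ∉ A) ∧ d i - c i < n * (vf i - uf i) :=
      hF1.mono fun i hi => huvw i hi
    have hcya : ∀ i, ya i ≤ c i := fun i => Nat.le_add_right _ _
    have huya : (↑ya : SN) ≤ ↑uf := Filter.Germ.coe_le.2 (hgood.mono fun i hi =>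
      le_trans (hcya i) hi.1)
    have huzb : (↑uf : SN) ≤ ↑zb := Filter.Germ.coe_le.2 ((hgood.and hF2).mono fun i hi =>
      le_trans hi.1.2.1 (le_trans hi.1.2.2.1 hi.2))
    have hvya : (↑ya : SN) ≤ ↑vf := Filter.Germ.coe_le.2 (hgood.mono fun i hi =>
      le_trans (hcya i) (le_trans hi.1 hi.2.1))
    have hvzb : (↑vf : SN) ≤ ↑zb := Filter.Germ.coe_le.2 ((hgood.and hF2).mono fun i hi =>
      le_trans hi.1.2.2.1 hi.2)
    -- IsSt for c and d ratios
    have hRc : ((toR ↑c - toR ↑ya) / (toR ↑zb - toR ↑ya)).IsSt p := by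
      apply isSt_of_bounds
      intro δ hδ
      constructor
      · show Hyperreal.ofSeq (fun _ => p - δ) ≤
          Hyperreal.ofSeq (fun i => ((c i : ℝ) - ya i) / ((zb i : ℝ) - ya i))
        apply Filter.Germ.coe_le.2
        filter_upwards [ev_large hyz (max 1 (1/δ))] with i hi
        set L := (zb i : ℝ) - ya i with hLdef
        have hL1 : (1:ℝ) ≤ L := le_trans (le_max_left _ _) hi
        have hLpos : (0:ℝ) < L := by linarith
        have hcr : (c i : ℝ) - ya i = (⌈p*L⌉₊ : ℝ) := by
          simp only [hcdef, ← hLdef]; push_cast; ring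
        rw [hcr, le_div_iff₀ hLpos]
        nlinarith [Nat.le_ceil (p*L)]
      · show Hyperreal.ofSeq (fun i => ((c i : ℝ) - ya i) / ((zb i : ℝ) - ya i)) ≤
          Hyperreal.ofSeq (fun _ => p + δ)
        apply Filter.Germ.coe_le.2
        filter_upwards [ev_large hyz (max 1 (1/δ))] with i hi
        set L := (zb i : ℝ) - ya i with hLdef
        have hL1 : (1:ℝ) ≤ L := le_trans (le_max_left _ _) hi
        have hLd : 1/δ ≤ L := le_trans (le_max_right _ _) hi
        have hLpos : (0:ℝ) < L := by linarith
        have hδL : 1 ≤ δ * L := by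
          rw [div_le_iff₀ hδ] at hLd; nlinarith
        have hcr : (c i : ℝ) - ya i = (⌈p*L⌉₊ : ℝ) := by
          simp only [hcdef, ← hLdef]; push_cast; ring
        rw [hcr, div_le_iff₀ hLpos]
        nlinarith [Nat.ceil_lt_add_one (mul_nonneg hp hLpos.le)]
    have hRd : ((toR ↑d - toR ↑ya) / (toR ↑zb - toR ↑ya)).IsSt q := by
      apply isSt_of_bounds
      intro δ hδ
      constructor
      · show Hyperreal.ofSeq (fun _ => q - δ) ≤
          Hyperreal.ofSeq (fun i => ((d i : ℝ) - ya i) / ((zb i : ℝ) - ya i))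
        apply Filter.Germ.coe_le.2
        filter_upwards [ev_large hyz (max 1 (1/δ))] with i hi
        set L := (zb i : ℝ) - ya i with hLdef
        have hL1 : (1:ℝ) ≤ L := le_trans (le_max_left _ _) hi
        have hLd : 1/δ ≤ L := le_trans (le_max_right _ _) hi
        have hLpos : (0:ℝ) < L := by linarith
        have hδL : 1 ≤ δ * L := by
          rw [div_le_iff₀ hδ] at hLd; nlinarith
        have hdr : (d i : ℝ) - ya i = (⌊q*L⌋₊ : ℝ) := by
          simp only [hddef, ← hLdef]; push_cast; ring
        rw [hdr, le_div_iff₀ hLpos]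
        nlinarith [Nat.sub_one_lt_floor (q*L)]
      · show Hyperreal.ofSeq (fun i => ((d i : ℝ) - ya i) / ((zb i : ℝ) - ya i)) ≤
          Hyperreal.ofSeq (fun _ => q + δ)
        apply Filter.Germ.coe_le.2
        filter_upwards [ev_large hyz (max 1 (1/δ))] with i hi
        set L := (zb i : ℝ) - ya i with hLdef
        have hL1 : (1:ℝ) ≤ L := le_trans (le_max_left _ _) hi
        have hLpos : (0:ℝ) < L := by linarith
        have hdr : (d i : ℝ) - ya i = (⌊q*L⌋₊ : ℝ) := by
          simp only [hddef, ← hLdef]; push_cast; ring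
        rw [hdr, div_le_iff₀ hLpos]
        nlinarith [Nat.floor_le (mul_nonneg (show (0:ℝ) ≤ q by linarith) hLpos.le)]
    have hniu := hnotinf uf huya huzb
    have hniv := hnotinf vf hvya hvzb
    have hstu := Hyperreal.isSt_st' hniu
    have hstv := Hyperreal.isSt_st' hniv
    -- p ≤ ubar
    have hRcRu : (toR ↑c - toR ↑ya) / (toR ↑zb - toR ↑ya) ≤
        (toR ↑uf - toR ↑ya) / (toR ↑zb - toR ↑ya) := by
      show Hyperreal.ofSeq (fun i => ((c i : ℝ) - ya i) / ((zb i : ℝ) - ya i)) ≤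
        Hyperreal.ofSeq (fun i => ((uf i : ℝ) - ya i) / ((zb i : ℝ) - ya i))
      apply Filter.Germ.coe_le.2
      filter_upwards [hgood, ev_large hyz 1] with i hi hL1
      have hcu : (c i : ℝ) ≤ uf i := by exact_mod_cast hi.1
      gcongr
    have hRvRd : (toR ↑vf - toR ↑ya) / (toR ↑zb - toR ↑ya) ≤
        (toR ↑d - toR ↑ya) / (toR ↑zb - toR ↑ya) := by
      show Hyperreal.ofSeq (fun i => ((vf i : ℝ) - ya i) / ((zb i : ℝ) - ya i)) ≤
        Hyperreal.ofSeq (fun i => ((d i : ℝ) - ya i) / ((zb i : ℝ) - ya i))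
      apply Filter.Germ.coe_le.2
      filter_upwards [hgood, ev_large hyz 1] with i hi hL1
      have hvd : (vf i : ℝ) ≤ d i := by exact_mod_cast hi.2.2.1
      gcongr
    have hpu : p ≤ stI ↑ya ↑zb ↑uf := hRc.le hstu hRcRu
    have hvq : stI ↑ya ↑zb ↑vf ≤ q := hstv.le hRd hRvRd
    -- length lower bound
    have hlow : (((q-p)/(2*n) : ℝ) : Hyperreal) ≤
        (toR ↑vf - toR ↑ya) / (toR ↑zb - toR ↑ya) - (toR ↑uf - toR ↑ya) / (toR ↑zb - toR ↑ya) := by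
      show Hyperreal.ofSeq (fun _ => (q-p)/(2*n)) ≤
        Hyperreal.ofSeq (fun i => ((vf i : ℝ) - ya i) / ((zb i : ℝ) - ya i) -
          ((uf i : ℝ) - ya i) / ((zb i : ℝ) - ya i))
      apply Filter.Germ.coe_le.2
      filter_upwards [hgood, hL] with i hi hLi
      set L := (zb i : ℝ) - ya i with hLdef
      have hL4 : 4/(q-p) ≤ L := le_trans (le_max_right _ _) hLi
      have hLpos : (0:ℝ) < L := lt_of_lt_of_le (div_pos (by positivity) hqp) hL4
      have hqpL : 4 ≤ (q-p)*L := by rw [div_le_iff₀ hqp] at hL4; nlinarith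
      obtain ⟨h1, h2, h3, -, h5⟩ := hi
      have hcd : c i ≤ d i := le_trans h1 (le_trans h2 h3)
      have h5' : d i - c i + 1 ≤ n * (vf i - uf i) := h5
      have hcast : (d i : ℝ) - c i + 1 ≤ (n:ℝ) * ((vf i : ℝ) - uf i) := by
        have := (Nat.cast_le (α := ℝ)).2 h5'
        push_cast [Nat.cast_sub hcd, Nat.cast_sub h2] at this
        linarith
      have hdc : (d i : ℝ) - c i = (⌊q*L⌋₊ : ℝ) - (⌈p*L⌉₊ : ℝ) := by
        simp only [hcdef, hddef, ← hLdef]; push_cast; ring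
      have h6 : (q-p)*L - 2 ≤ (d i : ℝ) - c i := by
        rw [hdc]
        nlinarith [Nat.sub_one_lt_floor (q*L), Nat.ceil_lt_add_one (mul_nonneg hp hLpos.le)]
      rw [div_sub_div_same, le_div_iff₀ hLpos]
      have hvu : (q-p)*L/2 ≤ (n:ℝ) * ((vf i:ℝ) - uf i) := by nlinarith
      have hn1 : (1:ℝ) ≤ n := by exact_mod_cast hn
      have : (vf i : ℝ) - ya i - ((uf i : ℝ) - ya i) = (vf i : ℝ) - uf i := by ring
      rw [this, div_mul_eq_mul_div, div_le_iff₀ (by positivity : (0:ℝ) < 2*n)]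
      nlinarith
    have hlen : (1/(2*n)) * (q - p) ≤ stI ↑ya ↑zb ↑vf - stI ↑ya ↑zb ↑uf := by
      have := (Hyperreal.isSt_refl_real ((q-p)/(2*n))).le (hstv.sub hstu) hlow
      calc (1/(2*n)) * (q - p) = (q-p)/(2*n) := by ring
        _ ≤ _ := this
    have hlenpos : (0:ℝ) < (1/(2*n)) * (q - p) := by positivity
    refine ⟨stI ↑ya ↑zb ↑uf, stI ↑ya ↑zb ↑vf, hpu, by linarith, hvq, hlen, ?_⟩
    rw [eq_empty_iff_forall_notMem]
    rintro s ⟨⟨x, ⟨hxA, hx1, hx2⟩, rfl⟩, hs1, hs2⟩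
    obtain ⟨xf, rfl⟩ := sn_rep x
    have hnix := hnotinf xf hx1 hx2
    have hlt1 : (toR ↑uf - toR ↑ya) / (toR ↑zb - toR ↑ya) <
        (toR ↑xf - toR ↑ya) / (toR ↑zb - toR ↑ya) :=
      Hyperreal.lt_of_st_lt hniu hnix hs1
    have hlt2 : (toR ↑xf - toR ↑ya) / (toR ↑zb - toR ↑ya) <
        (toR ↑vf - toR ↑ya) / (toR ↑zb - toR ↑ya) :=
      Hyperreal.lt_of_st_lt hnix hniv hs2
    have hux : toR ↑uf < toR ↑xf := by
      have := (div_lt_div_iff_of_pos_right hDpos).1 hlt1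
      linarith [sub_lt_sub_iff_right (toR ↑ya) |>.1 this]
    have hxv : toR ↑xf < toR ↑vf := by
      have := (div_lt_div_iff_of_pos_right hDpos).1 hlt2
      linarith [sub_lt_sub_iff_right (toR ↑ya) |>.1 this]
    have hux' : ∀ᶠ i in U, uf i < xf i := by
      have h := Hyperreal.ofSeq_lt_ofSeq.1 hux
      exact h.mono fun i hi => by simpa using hi
    have hxv' : ∀ᶠ i in U, xf i < vf i := by
      have h := Hyperreal.ofSeq_lt_ofSeq.1 hxv
      exact h.mono fun i hi => by simpa using hi
    have hxA' : ∀ᶠ i in U, xf i ∈ A := hxA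
    obtain ⟨i, hg, h1, h2, h3⟩ := (hgood.and (hux'.and (hxv'.and hxA'))).exists
    exact hg.2.2.2.1 (xf i) h1.le h2.le h3
  have h0 := null_of_porous E (1/(2*n)) (by positivity) hEsub hporous
  have hlam' : lam (starN A) ↑ya ↑zb = 0 := by
    rw [lam, ← hEdef, h0, ENNReal.toReal_zero]
  rw [hlam'] at hlam
  exact lt_irrefl 0 hlam

theorem stmt_19 (A B : Set ℕ) (hA : SIM A) (h : FinEmbed A B) :
    ∃ y z : SN, InfInterval y z ∧ gap (starN A) y z = 0 ∧
      ∃ t : SN, ∀ x ∈ starN A ∩ Set.Icc y z, t + x ∈ starN B := by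
  classical
  have hsel : ∀ i : ℕ, ∃ a b t : ℕ, a + (i+1) ≤ b ∧
      (∀ u v : ℕ, a ≤ u → u ≤ v → v ≤ b →
        (∀ x : ℕ, u ≤ x → x ≤ v → x ∉ A) → (i+1) * (v - u) ≤ b - a) ∧
      (∀ x : ℕ, x ∈ A → a ≤ x → x ≤ b → t + x ∈ B) := by
    intro i
    obtain ⟨a, b, hab, hgap⟩ := exists_good A hA (i+1) (Nat.succ_pos i)
    have hfin : (A ∩ Icc a b).Finite := (Set.finite_Icc a b).subset inter_subset_right
    obtain ⟨t, ht⟩ := h hfin.toFinset (by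
      intro x hx
      rw [Finset.mem_coe, Set.Finite.mem_toFinset] at hx
      exact hx.1)
    exact ⟨a, b, t, hab, hgap, fun x hxA hx1 hx2 =>
      ht x (by rw [Set.Finite.mem_toFinset]; exact ⟨hxA, hx1, hx2⟩)⟩
  choose af bf tf hab hgap ht using hsel
  have hDpos : (0 : Hyperreal) < toR ↑bf - toR ↑af := by
    show Hyperreal.ofSeq (fun _ => 0) < Hyperreal.ofSeq (fun i => (bf i : ℝ) - af i)
    refine Hyperreal.ofSeq_lt_ofSeq.2 (Eventually.of_forall fun i => ?_)
    have := hab i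
    have h1 : (af i : ℝ) < bf i := by exact_mod_cast (by omega : af i < bf i)
    linarith
  refine ⟨↑af, ↑bf, ?_, ?_, ↑tf, ?_⟩
  · intro m
    have hev : ∀ᶠ i in U, af i + m < bf i := by
      have h1 : ∀ᶠ i in atTop, af i + m < bf i :=
        eventually_atTop.2 ⟨m, fun i hi => by have := hab i; omega⟩
      exact Filter.hyperfilter_le_cofinite (Nat.cofinite_eq_atTop ▸ h1)
    rw [show ((m : ℕ) : SN) = ↑(fun _ : ℕ => m) from (Filter.Germ.natCast_def _).symm]
    show (↑(fun i => af i + m) : SN) < ↑bf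
    exact Filter.Germ.coe_lt.2 hev
  · show sSup _ = 0
    set S := {r : ℝ | 0 ≤ r ∧ ∃ c d : SN, c ∈ Icc (↑af : SN) ↑bf ∧ d ∈ Icc (↑af : SN) ↑bf ∧
      c ≤ d ∧ Icc c d ∩ starN A = ∅ ∧
      (r : Hyperreal) ≤ (toR d - toR c) / (toR ↑bf - toR ↑af)} with hSdef
    have hsub : S ⊆ {(0:ℝ)} := by
      rintro r ⟨hr0, c, d, ⟨hc1, hc2⟩, ⟨hd1, hd2⟩, hcd, hem, hle⟩
      obtain ⟨cf, rfl⟩ := sn_rep c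
      obtain ⟨df, rfl⟩ := sn_rep d
      have hae : ∀ᶠ i in U, ∀ x : ℕ, cf i ≤ x → x ≤ df i → x ∉ A := by
        by_contra hcon2
        have hne := Ultrafilter.eventually_not.2 hcon2
        have hex : ∀ᶠ i in U, ∃ x : ℕ, cf i ≤ x ∧ x ≤ df i ∧ x ∈ A :=
          hne.mono fun i hi => by push_neg at hi; exact hi
        set wf : ℕ → ℕ := fun i =>
          if hh : ∃ x : ℕ, cf i ≤ x ∧ x ≤ df i ∧ x ∈ A then hh.choose else 0 with hwfdef
        have hw : ∀ᶠ i in U, cf i ≤ wf i ∧ wf i ≤ df i ∧ wf i ∈ A := by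
          refine hex.mono fun i hi => ?_
          simp only [hwfdef, dif_pos hi]
          exact hi.choose_spec
        have hmem : (↑wf : SN) ∈ Icc (↑cf : SN) ↑df ∩ starN A := by
          refine ⟨⟨Filter.Germ.coe_le.2 (hw.mono fun i hi => hi.1),
            Filter.Germ.coe_le.2 (hw.mono fun i hi => hi.2.1)⟩, ?_⟩
          exact hw.mono fun i hi => hi.2.2
        rw [hem] at hmem
        exact notMem_empty _ hmem
      have hcd' : ∀ᶠ i in U, cf i ≤ df i := Filter.Germ.coe_le.1 hcd
      have hac : ∀ᶠ i in U, af i ≤ cf i := Filter.Germ.coe_le.1 hc1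
      have hdb : ∀ᶠ i in U, df i ≤ bf i := Filter.Germ.coe_le.1 hd2
      have hev2 : ∀ᶠ i in U, (i+1) * (df i - cf i) ≤ bf i - af i :=
        (hae.and (hcd'.and (hac.and hdb))).mono fun i hi =>
          hgap i (cf i) (df i) hi.2.2.1 hi.2.1 hi.2.2.2 hi.1
      have hle2 : (toR ↑df - toR ↑cf) / (toR ↑bf - toR ↑af) ≤
          Hyperreal.ofSeq (fun i => 1/((i:ℝ)+1)) := by
        rw [div_le_iff₀ hDpos]
        show Hyperreal.ofSeq (fun i => (df i : ℝ) - cf i) ≤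
          Hyperreal.ofSeq (fun i => (1/((i:ℝ)+1)) * ((bf i : ℝ) - af i))
        apply Filter.Germ.coe_le.2
        filter_upwards [hev2, hcd'] with i h2 h3
        have hab' := hab i
        have hc : ((i:ℝ)+1) * ((df i : ℝ) - cf i) ≤ (bf i : ℝ) - af i := by
          have := (Nat.cast_le (α := ℝ)).2 h2
          push_cast [Nat.cast_sub h3, Nat.cast_sub (by omega : af i ≤ bf i)] at this
          linarith
        have hip : (0:ℝ) < (i:ℝ)+1 := by positivity
        rw [div_mul_eq_mul_div, one_mul, le_div_iff₀ hip]
        nlinarith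
      rcases eq_or_lt_of_le hr0 with hr | hr
      · exact hr.symm
      · exfalso
        have hlt : Hyperreal.ofSeq (fun i => 1/((i:ℝ)+1)) < ((r:ℝ) : Hyperreal) := by
          show Hyperreal.ofSeq (fun i => 1/((i:ℝ)+1)) < Hyperreal.ofSeq (fun _ => r)
          apply Hyperreal.ofSeq_lt_ofSeq.2
          have h1 : ∀ᶠ i : ℕ in atTop, 1/((i:ℝ)+1) < r := by
            refine eventually_atTop.2 ⟨⌈1/r⌉₊, fun i hi => ?_⟩
            have h2 : (1/r : ℝ) ≤ (i : ℝ) := le_trans (Nat.le_ceil _) (by exact_mod_cast hi)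
            rw [div_lt_iff₀ (by positivity : (0:ℝ) < (i:ℝ)+1)]
            rw [div_le_iff₀ hr] at h2
            nlinarith
          exact Filter.hyperfilter_le_cofinite (Nat.cofinite_eq_atTop ▸ h1)
        have := lt_of_le_of_lt (le_trans hle hle2) hlt
        exact lt_irrefl _ this
    rcases eq_empty_or_nonempty S with hS | hS
    · rw [hS]
      exact Real.sSup_empty
    · have hSeq : S = {(0:ℝ)} := by
        refine Subset.antisymm hsub ?_
        obtain ⟨r, hr⟩ := hS
        have := hsub hr
        rw [mem_singleton_iff] at this
        subst this
        rintro x rfl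
        exact hr
      rw [hSeq]
      exact csSup_singleton _
  · rintro x ⟨hxA, hx1, hx2⟩
    obtain ⟨xf, rfl⟩ := sn_rep x
    have h1 : ∀ᶠ i in U, af i ≤ xf i := Filter.Germ.coe_le.1 hx1
    have h2 : ∀ᶠ i in U, xf i ≤ bf i := Filter.Germ.coe_le.1 hx2
    have h3 : ∀ᶠ i in U, xf i ∈ A := hxA
    show (↑(fun i => tf i + xf i) : SN) ∈ starN B
    exact (h1.and (h2.and h3)).mono fun i hi => ht i (xf i) hi.2.2 hi.1 hi.2.1
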